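/- arXiv:2601.21089 — 4 statements merged into one kernel-verified Lean document; each statement's English description precedes it below -/
import Mathlib

section
/- Let Λ ⊂ ℝ^d be a compact convex set with positive Lebesgue measure, let Q : ℝ^d → ℝ be continuous on Λ, let q0 ∈ ℝ be such that the decision boundary K = {x ∈ Λ : Q(x) = q0} is nonempty, and assume that for every z ∈ K and every r > 0 the sets {x ∈ Λ : Q(x) > q0} ∩ B(z, r) and {x ∈ Λ : Q(x) < q0} ∩ B(z, r) have positive Lebesgue measure. Let x_1, x_2, … be i.i.d. random points uniformly distributed on Λ, label each sample y_i = +1 if Q(x_i) ≥ q0 and y_i = −1 otherwise, and for each n let M_n denote the maximum of ‖x_i − x_j‖ over all pairs (x_i, x_j) with 1 ≤ i < j ≤ n that are Gabriel neighbors of {x_1, …, x_n} and have y_i ≠ y_j (with M_n = 0 if no such pair exists). Then for every ε > 0, P(M_n > ε) → 0 as n → ∞. -/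
open MeasureTheory ProbabilityTheory Metric Filter

/-- `a` and `b` are Gabriel neighbors of the point set `X`: both belong to `X`, are distinct,
and the open ball having the segment from `a` to `b` as a diameter contains no point of `X`
other than `a` and `b`. -/
def IsGabrielNbr {d : ℕ} (X : Set (EuclideanSpace ℝ (Fin d)))
    (a b : EuclideanSpace ℝ (Fin d)) : Prop :=
  a ∈ X ∧ b ∈ X ∧ a ≠ b ∧
    ∀ c ∈ X, c ≠ a → c ≠ b → c ∉ Metric.ball (midpoint ℝ a b) (dist a b / 2)

/-- The maximum distance between pairs of Gabriel neighbors of `{x_0, …, x_{n-1}}`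
with different labels (label `+1` iff `Q x ≥ q0`), set to `0` when no such pair exists. -/
noncomputable def gabrielEditedMaxDist {d : ℕ} {Ω : Type*}
    (X : ℕ → Ω → EuclideanSpace ℝ (Fin d))
    (Q : EuclideanSpace ℝ (Fin d) → ℝ) (q0 : ℝ) (n : ℕ) (ω : Ω) : ℝ :=
  sSup (insert (0 : ℝ)
    {r : ℝ | ∃ i, ∃ j, i < j ∧ j < n ∧
      IsGabrielNbr ((fun k => X k ω) '' {k | k < n}) (X i ω) (X j ω) ∧
      ¬ ((q0 ≤ Q (X i ω)) ↔ (q0 ≤ Q (X j ω))) ∧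
      r = dist (X i ω) (X j ω)})

theorem stmt0 {d : ℕ} (Λ : Set (EuclideanSpace ℝ (Fin d)))
    (hΛcompact : IsCompact Λ) (hΛconvex : Convex ℝ Λ) (hΛpos : 0 < volume Λ)
    (Q : EuclideanSpace ℝ (Fin d) → ℝ) (hQ : ContinuousOn Q Λ) (q0 : ℝ)
    (hK : ({x ∈ Λ | Q x = q0}).Nonempty)
    (hsides : ∀ z ∈ {x ∈ Λ | Q x = q0}, ∀ r : ℝ, 0 < r →
      0 < volume ({x ∈ Λ | q0 < Q x} ∩ Metric.ball z r) ∧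
      0 < volume ({x ∈ Λ | Q x < q0} ∩ Metric.ball z r))
    {Ω : Type*} [MeasurableSpace Ω] (P : Measure Ω) [IsProbabilityMeasure P]
    (X : ℕ → Ω → EuclideanSpace ℝ (Fin d))
    (hXmeas : ∀ i, Measurable (X i))
    (hXindep : iIndepFun X P)
    (hXunif : ∀ i, Measure.map (X i) P = (volume Λ)⁻¹ • volume.restrict Λ)
    (ε : ℝ) (hε : 0 < ε) :
    Tendsto (fun n => P {ω | ε < gabrielEditedMaxDist X Q q0 n ω}) atTop (nhds 0) := by
  classical
  have hΛmeas : MeasurableSet Λ := hΛcompact.isClosed.measurableSet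
  have hΛfin : volume Λ < ⊤ := hΛcompact.measure_lt_top
  -- the reference measure
  set ν : Measure (EuclideanSpace ℝ (Fin d)) := (volume Λ)⁻¹ • volume.restrict Λ with hν
  have hνapp : ∀ s : Set (EuclideanSpace ℝ (Fin d)), MeasurableSet s →
      ν s = (volume Λ)⁻¹ * volume (s ∩ Λ) := by
    intro s hs
    simp [hν, Measure.restrict_apply hs]
  -- every ball around a point of Λ meets Λ in positive volume
  have hint : (interior Λ).Nonempty := by
    rw [hΛconvex.interior_nonempty_iff_affineSpan_eq_top]
    by_contra h
    have h0 : volume Λ = 0 := by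
      refine measure_mono_null (subset_affineSpan ℝ Λ) ?_
      exact Measure.addHaar_affineSubspace _ _ h
    exact absurd h0 hΛpos.ne'
  obtain ⟨p, hp⟩ := hint
  have hball : ∀ u ∈ Λ, ∀ r : ℝ, 0 < r → 0 < volume (Λ ∩ ball u r) := by
    intro u hu r hr
    set t : ℝ := min 1 (r / (1 + dist p u)) with ht
    have hden : (0:ℝ) < 1 + dist p u := by positivity
    have ht0 : 0 < t := lt_min one_pos (by positivity)
    have ht1 : t ≤ 1 := min_le_left _ _
    set q : EuclideanSpace ℝ (Fin d) := u + t • (p - u) with hq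
    have hqint : q ∈ interior Λ :=
      hΛconvex.add_smul_sub_mem_interior hu hp ⟨ht0, ht1⟩
    have hqu : dist q u < r := by
      have : dist q u = t * dist p u := by
        rw [hq, dist_eq_norm]
        simp only [add_sub_cancel_left, norm_smul, Real.norm_eq_abs, abs_of_pos ht0]
        rw [dist_eq_norm]
      rw [this]
      calc t * dist p u ≤ (r / (1 + dist p u)) * dist p u := by
            exact mul_le_mul_of_nonneg_right (min_le_right _ _) dist_nonneg
        _ < r := by
            rw [div_mul_eq_mul_div, div_lt_iff₀ hden]
            nlinarith [dist_nonneg (x := p) (y := u)]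
    obtain ⟨δ, hδ0, hδ⟩ := Metric.mem_nhds_iff.mp (mem_interior_iff_mem_nhds.mp hqint)
    have hδ'0 : 0 < min δ (r - dist q u) := lt_min hδ0 (by linarith)
    have hsub : ball q (min δ (r - dist q u)) ⊆ Λ ∩ ball u r := by
      intro x hx
      constructor
      · exact hδ (mem_ball.mpr (lt_of_lt_of_le (mem_ball.mp hx) (min_le_left _ _)))
      · have h1 : dist x q < r - dist q u := lt_of_lt_of_le hx (min_le_right _ _)
        have := dist_triangle x q u
        exact mem_ball.mpr (by linarith)
    exact lt_of_lt_of_le (measure_ball_pos volume q hδ'0) (measure_mono hsub)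
  -- a finite net of Λ at scale ε/4
  obtain ⟨F, hFΛ, hFfin, hFcov⟩ := hΛcompact.elim_finite_subcover_image
    (fun u (_ : u ∈ Λ) => isOpen_ball (x := u) (ε := ε / 4))
    (fun x hx => Set.mem_biUnion hx (mem_ball_self (by linarith)))
  -- the per-point miss probability
  set S : EuclideanSpace ℝ (Fin d) → Set (EuclideanSpace ℝ (Fin d)) :=
    fun u => Λ ∩ ball u (ε / 4) with hS
  have hSmeas : ∀ u, MeasurableSet (S u) := fun u => hΛmeas.inter measurableSet_ball
  set c : EuclideanSpace ℝ (Fin d) → ENNReal := fun u => ν ((S u)ᶜ) with hc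
  have hc1 : ∀ u ∈ F, c u < 1 := by
    intro u hu
    have hSpos : 0 < ν (S u) := by
      rw [hνapp _ (hSmeas u)]
      have h1 : (0:ENNReal) < (volume Λ)⁻¹ := ENNReal.inv_pos.mpr hΛfin.ne
      have h2 : 0 < volume (S u ∩ Λ) := by
        have hss : S u ∩ Λ = S u := Set.inter_eq_left.mpr Set.inter_subset_left
        rw [hss]
        exact hball u (hFΛ hu) _ (by linarith)
      exact ENNReal.mul_pos h1.ne' h2.ne'
    have hsum : ν (S u) + ν ((S u)ᶜ) = 1 := by
      have huniv : ν Set.univ = 1 := by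
        rw [hνapp _ MeasurableSet.univ, Set.univ_inter,
          ENNReal.inv_mul_cancel hΛpos.ne' hΛfin.ne]
      rw [measure_add_measure_compl (hSmeas u), huniv]
    by_contra hge
    push_neg at hge
    have h1 : (1 : ENNReal) < 1 + ν (S u) := ENNReal.lt_add_right ENNReal.one_ne_top hSpos.ne'
    have h2 : (1 : ENNReal) + ν (S u) ≤ c u + ν (S u) := add_le_add hge le_rfl
    have h3 : c u + ν (S u) = 1 := by rw [add_comm]; exact hsum
    have h4 := lt_of_lt_of_le h1 h2
    rw [h3] at h4
    exact absurd h4 (lt_irrefl _)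
  -- null event: some sample outside Λ
  set N : Set Ω := ⋃ i, X i ⁻¹' Λᶜ with hNdef
  have hN : P N = 0 := by
    refine measure_iUnion_null fun i => ?_
    have : P (X i ⁻¹' Λᶜ) = ν Λᶜ := by
      rw [← Measure.map_apply (hXmeas i) hΛmeas.compl, hXunif i]
    rw [this, hνapp _ hΛmeas.compl]
    simp
  -- key bound
  have hbound : ∀ n, P {ω | ε < gabrielEditedMaxDist X Q q0 n ω} ≤
      ∑ u ∈ hFfin.toFinset, (c u) ^ n := by
    intro n
    have hsubset : {ω | ε < gabrielEditedMaxDist X Q q0 n ω} ⊆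
        N ∪ ⋃ u ∈ hFfin.toFinset, ⋂ i ∈ Finset.range n, X i ⁻¹' (S u)ᶜ := by
      intro ω hω
      by_contra hcon
      rw [Set.mem_union, not_or] at hcon
      obtain ⟨hωN, hωT⟩ := hcon
      have hωΛ : ∀ i, X i ω ∈ Λ := by
        intro i
        by_contra h
        exact hωN (Set.mem_iUnion.mpr ⟨i, h⟩)
      have hhit : ∀ u ∈ F, ∃ i < n, X i ω ∈ S u := by
        intro u hu
        by_contra h
        push_neg at h
        refine hωT (Set.mem_biUnion (hFfin.mem_toFinset.mpr hu) ?_)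
        simp only [Set.mem_iInter, Finset.mem_range, Set.mem_preimage, Set.mem_compl_iff]
        exact fun i hi => h i hi
      -- now show the sup is ≤ ε
      have hle : gabrielEditedMaxDist X Q q0 n ω ≤ ε := by
        refine csSup_le ⟨0, Set.mem_insert _ _⟩ ?_
        rintro r (rfl | ⟨i, j, hij, hjn, hGab, hlab, rfl⟩)
        · exact hε.le
        by_contra hrε
        push_neg at hrε
        set a := X i ω with ha
        set b := X j ω with hb
        have hLε : ε < dist a b := hrε
        have hmΛ : midpoint ℝ a b ∈ Λ :=
          hΛconvex.segment_subset (hωΛ i) (hωΛ j) (midpoint_mem_segment a b)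
        obtain ⟨u, hu, hmu⟩ := Set.mem_iUnion₂.mp (hFcov hmΛ)
        obtain ⟨i₀, hi₀n, hi₀⟩ := hhit u hu
        set w := X i₀ ω with hw
        have hwm : dist w (midpoint ℝ a b) < ε / 2 := by
          have h1 : dist w u < ε / 4 := hi₀.2
          have h2 : dist (midpoint ℝ a b) u < ε / 4 := hmu
          calc dist w (midpoint ℝ a b) ≤ dist w u + dist u (midpoint ℝ a b) :=
                dist_triangle _ _ _
            _ < ε / 4 + ε / 4 := by rw [dist_comm u]; exact add_lt_add h1 h2
            _ = ε / 2 := by ring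
        have ham : dist a (midpoint ℝ a b) = dist a b / 2 := by
          rw [dist_comm, dist_midpoint_left, show ‖(2:ℝ)‖ = 2 by norm_num]
          ring
        have hbm : dist b (midpoint ℝ a b) = dist a b / 2 := by
          rw [dist_comm, dist_midpoint_right, show ‖(2:ℝ)‖ = 2 by norm_num]
          ring
        have hwa : w ≠ a := fun h => by rw [h, ham] at hwm; linarith
        have hwb : w ≠ b := fun h => by rw [h, hbm] at hwm; linarith
        have hwX : w ∈ (fun k => X k ω) '' {k | k < n} := ⟨i₀, hi₀n, rfl⟩
        exact hGab.2.2.2 w hwX hwa hwb (mem_ball.mpr (by linarith))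
      exact absurd hle (not_le.mpr hω)
    calc P {ω | ε < gabrielEditedMaxDist X Q q0 n ω}
        ≤ P (N ∪ ⋃ u ∈ hFfin.toFinset, ⋂ i ∈ Finset.range n, X i ⁻¹' (S u)ᶜ) :=
          measure_mono hsubset
      _ ≤ P N + P (⋃ u ∈ hFfin.toFinset, ⋂ i ∈ Finset.range n, X i ⁻¹' (S u)ᶜ) :=
          measure_union_le _ _
      _ = P (⋃ u ∈ hFfin.toFinset, ⋂ i ∈ Finset.range n, X i ⁻¹' (S u)ᶜ) := by
          rw [hN, zero_add]
      _ ≤ ∑ u ∈ hFfin.toFinset, P (⋂ i ∈ Finset.range n, X i ⁻¹' (S u)ᶜ) :=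
          measure_biUnion_finset_le _ _
      _ ≤ ∑ u ∈ hFfin.toFinset, (c u) ^ n := by
          refine Finset.sum_le_sum fun u _ => ?_
          have hprod : P (⋂ i ∈ Finset.range n, X i ⁻¹' (S u)ᶜ) =
              ∏ i ∈ Finset.range n, P (X i ⁻¹' (S u)ᶜ) := by
            refine hXindep.measure_inter_preimage_eq_mul (Finset.range n)
              (sets := fun _ => (S u)ᶜ) fun i _ => (hSmeas u).compl
          rw [hprod]
          have hval : ∀ i, P (X i ⁻¹' (S u)ᶜ) = c u := by
            intro i
            rw [← Measure.map_apply (hXmeas i) (hSmeas u).compl, hXunif i]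
          rw [Finset.prod_congr rfl fun i _ => hval i, Finset.prod_const,
            Finset.card_range]
  -- conclude by squeezing
  have hlim : Tendsto (fun n => ∑ u ∈ hFfin.toFinset, (c u) ^ n) atTop (nhds 0) := by
    have : Tendsto (fun n => ∑ u ∈ hFfin.toFinset, (c u) ^ n) atTop
        (nhds (∑ u ∈ hFfin.toFinset, (0:ENNReal))) := by
      refine tendsto_finset_sum _ fun u hu => ?_
      exact ENNReal.tendsto_pow_atTop_nhds_zero_of_lt_one (hc1 u (hFfin.mem_toFinset.mp hu))
    simpa using this
  exact tendsto_of_tendsto_of_tendsto_of_le_of_le tendsto_const_nhds hlim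
    (fun n => zero_le) hbound
end

section
/- Let X be a finite set of distinct points in ℝ^d, and let y : X → {−1, +1} be a labeling such that both labels occur. Let (a, b) be a pair of points of X with y(a) ≠ y(b) that minimizes ‖a − b‖ among all pairs of points of X with different labels. Then a and b are Gabriel neighbors of X, i.e., the open ball centered at (a+b)/2 with radius ‖a−b‖/2 contains no point of X other than a and b. In particular, the Gabriel edited set of (X, y) is nonempty. -/
theorem stmt5 {d : ℕ} (X : Finset (EuclideanSpace ℝ (Fin d)))
    (y : EuclideanSpace ℝ (Fin d) → ℝ)
    (hy : ∀ x ∈ X, y x = 1 ∨ y x = -1)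
    (hpos : ∃ x ∈ X, y x = 1) (hneg : ∃ x ∈ X, y x = -1)
    (a b : EuclideanSpace ℝ (Fin d)) (ha : a ∈ X) (hb : b ∈ X) (hab : y a ≠ y b)
    (hmin : ∀ a' ∈ X, ∀ b' ∈ X, y a' ≠ y b' → dist a b ≤ dist a' b') :
    IsGabrielNbr (↑X) a b ∧
      ∃ p ∈ X, ∃ q ∈ X, IsGabrielNbr (↑X) p q ∧ y p ≠ y q := by
  have hgab : IsGabrielNbr (↑X) a b := by
    refine ⟨ha, hb, fun h => hab (by rw [h]), ?_⟩
    intro c hc hca hcb hball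
    rw [Metric.mem_ball] at hball
    have hma : dist (midpoint ℝ a b) a = dist a b / 2 := by
      rw [dist_midpoint_left (𝕜 := ℝ)]; simp [Real.norm_ofNat]; ring
    have hmb : dist (midpoint ℝ a b) b = dist a b / 2 := by
      rw [dist_midpoint_right (𝕜 := ℝ)]; simp [Real.norm_ofNat]; ring
    have hca' : dist c a < dist a b :=
      calc dist c a ≤ dist c (midpoint ℝ a b) + dist (midpoint ℝ a b) a := dist_triangle _ _ _
        _ < dist a b / 2 + dist a b / 2 := by rw [hma]; linarith
        _ = dist a b := by ring
    have hcb' : dist c b < dist a b :=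
      calc dist c b ≤ dist c (midpoint ℝ a b) + dist (midpoint ℝ a b) b := dist_triangle _ _ _
        _ < dist a b / 2 + dist a b / 2 := by rw [hmb]; linarith
        _ = dist a b := by ring
    have hcX : c ∈ X := by exact_mod_cast hc
    by_cases h : y c = y a
    · have : y c ≠ y b := fun h' => hab (h.symm.trans h')
      exact absurd (hmin c hcX b hb this) (not_le.2 hcb')
    · exact absurd (hmin c hcX a ha h) (not_le.2 hca')
  exact ⟨hgab, a, ha, b, hb, hgab, hab⟩
end

section
/- Let Λ ⊂ ℝ^d be a compact convex set with positive Lebesgue measure, let Q : ℝ^d → ℝ be continuous on Λ, let q0 ∈ ℝ be such that K = {x ∈ Λ : Q(x) = q0} is nonempty, and assume that for every z ∈ K and every r > 0 the sets {x ∈ Λ : Q(x) > q0} ∩ B(z, r) and {x ∈ Λ : Q(x) < q0} ∩ B(z, r) have positive Lebesgue measure. Let x_1, x_2, … be i.i.d. random points uniformly distributed on Λ, label y_i = +1 if Q(x_i) ≥ q0 and y_i = −1 otherwise, and for each n let D_n denote the maximum over all pairs (x_i, x_j), 1 ≤ i < j ≤ n, that are Gabriel neighbors of {x_1, …, x_n}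 with y_i ≠ y_j, of the distance from the midpoint (x_i + x_j)/2 to K (with D_n = 0 if no such pair exists). Then for every ε > 0, P(D_n > ε) → 0 as n → ∞, i.e., the Characteristic Boundary Points become increasingly close to the decision boundary as the sample size increases. -/
set_option maxHeartbeats 1000000

open MeasureTheory ProbabilityTheory Metric Filter
open scoped Classical

/-- The maximum distance from a Characteristic Boundary Point (the midpoint of a pair of
oppositely labeled Gabriel neighbors of `{x_0, …, x_{n-1}}`) to the decision boundary `K`,
set to `0` when no such pair exists. -/
noncomputable def cbpMaxDistToBoundary {d : ℕ} {Ω : Type*}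
    (X : ℕ → Ω → EuclideanSpace ℝ (Fin d))
    (Q : EuclideanSpace ℝ (Fin d) → ℝ) (q0 : ℝ)
    (K : Set (EuclideanSpace ℝ (Fin d))) (n : ℕ) (ω : Ω) : ℝ :=
  sSup (insert (0 : ℝ)
    {r : ℝ | ∃ i, ∃ j, i < j ∧ j < n ∧
      IsGabrielNbr ((fun k => X k ω) '' {k | k < n}) (X i ω) (X j ω) ∧
      ¬ ((q0 ≤ Q (X i ω)) ↔ (q0 ≤ Q (X j ω))) ∧
      r = Metric.infDist (midpoint ℝ (X i ω) (X j ω)) K})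

/-- Number of indices `k < n` with `f k ∈ A`. -/
noncomputable def cntIn {α : Type*} (f : ℕ → α) (A : Set α) (n : ℕ) : ℕ :=
  ((Finset.range n).filter (fun k => f k ∈ A)).card

lemma cntIn_mono {α : Type*} (f : ℕ → α) {A B : Set α} (hAB : A ⊆ B) (n : ℕ) :
    cntIn f A n ≤ cntIn f B n :=
  Finset.card_le_card (Finset.monotone_filter_right _ (fun k _ hk => hAB hk))

lemma ivt_mid {d : ℕ} {Λ : Set (EuclideanSpace ℝ (Fin d))} (hconv : Convex ℝ Λ)
    {Q : EuclideanSpace ℝ (Fin d) → ℝ} (hQ : ContinuousOn Q Λ) {q0 : ℝ}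
    {a b : EuclideanSpace ℝ (Fin d)} (ha : a ∈ Λ) (hb : b ∈ Λ)
    (hQb : Q b ≤ q0) (hQa : q0 ≤ Q a) :
    Metric.infDist (midpoint ℝ a b) {x ∈ Λ | Q x = q0} ≤ dist a b / 2 := by
  have hseg : segment ℝ b a ⊆ Λ := hconv.segment_subset hb ha
  have hmapsto : ∀ θ ∈ Set.Icc (0:ℝ) 1, (AffineMap.lineMap b a : ℝ →ᵃ[ℝ] _) θ ∈ Λ := by
    intro θ hθ
    exact hseg (by rw [segment_eq_image_lineMap]; exact Set.mem_image_of_mem _ hθ)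
  have hcont : ContinuousOn (Q ∘ (AffineMap.lineMap b a : ℝ →ᵃ[ℝ] _)) (Set.Icc 0 1) :=
    hQ.comp (AffineMap.lineMap_continuous.continuousOn) hmapsto
  have hq0mem : q0 ∈ Set.Icc ((Q ∘ (AffineMap.lineMap b a : ℝ →ᵃ[ℝ] _)) 0)
      ((Q ∘ (AffineMap.lineMap b a : ℝ →ᵃ[ℝ] _)) 1) := by
    simp only [Function.comp_apply, AffineMap.lineMap_apply_zero, AffineMap.lineMap_apply_one]
    exact ⟨hQb, hQa⟩
  obtain ⟨θ, hθ, hQθ⟩ := intermediate_value_Icc (zero_le_one) hcont hq0mem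
  set z := (AffineMap.lineMap b a : ℝ →ᵃ[ℝ] _) θ with hz
  have hzK : z ∈ {x ∈ Λ | Q x = q0} := ⟨hmapsto θ hθ, hQθ⟩
  have h1 : Metric.infDist (midpoint ℝ a b) {x ∈ Λ | Q x = q0} ≤ dist (midpoint ℝ a b) z :=
    Metric.infDist_le_dist_of_mem hzK
  have hm : midpoint ℝ a b = (AffineMap.lineMap b a : ℝ →ᵃ[ℝ] _) (1/2 : ℝ) := by
    rw [midpoint_comm, ← lineMap_one_half]
  have h2 : dist (midpoint ℝ a b) z ≤ dist a b / 2 := by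
    rw [hm, hz, dist_lineMap_lineMap]
    have habs : |(1:ℝ)/2 - θ| ≤ 1/2 := abs_le.2 ⟨by linarith [hθ.2], by linarith [hθ.1]⟩
    calc |(1:ℝ)/2 - θ| * dist b a ≤ 1/2 * dist b a :=
          mul_le_mul_of_nonneg_right habs dist_nonneg
      _ = dist a b / 2 := by rw [dist_comm]; ring
  linarith

lemma geom_key {d : ℕ} {Λ : Set (EuclideanSpace ℝ (Fin d))} (hconv : Convex ℝ Λ)
    {Q : EuclideanSpace ℝ (Fin d) → ℝ} (hQ : ContinuousOn Q Λ) {q0 ε : ℝ} (hε : 0 < ε)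
    {t : Set (EuclideanSpace ℝ (Fin d))} (hcover : Λ ⊆ ⋃ z ∈ t, Metric.ball z (ε/4))
    {Ω : Type*} {X : ℕ → Ω → EuclideanSpace ℝ (Fin d)} {ω : Ω} {n : ℕ}
    (hmem : ∀ k, X k ω ∈ Λ) (hinj : Function.Injective (fun k => X k ω))
    (hlt : ε < cbpMaxDistToBoundary X Q q0 {x ∈ Λ | Q x = q0} n ω) :
    ∃ z ∈ t, cntIn (fun k => X k ω) (Metric.ball z (ε/4)) n ≤ 2 := by
  classical
  set K := {x ∈ Λ | Q x = q0} with hK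
  set S := {r : ℝ | ∃ i, ∃ j, i < j ∧ j < n ∧
      IsGabrielNbr ((fun k => X k ω) '' {k | k < n}) (X i ω) (X j ω) ∧
      ¬ ((q0 ≤ Q (X i ω)) ↔ (q0 ≤ Q (X j ω))) ∧
      r = Metric.infDist (midpoint ℝ (X i ω) (X j ω)) K} with hS
  have hex : ∃ r ∈ insert (0:ℝ) S, ε < r := by
    by_contra h
    push_neg at h
    exact absurd (Real.sSup_le (fun x hx => h x hx) hε.le) (not_le.2 hlt)
  obtain ⟨r, hrmem, hrε⟩ := hex
  have hrS : r ∈ S := by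
    rcases hrmem with h0 | h
    · exact absurd h0 (by intro h0; rw [h0] at hrε; linarith)
    · exact h
  obtain ⟨i, j, hij, hjn, hGab, hlab, hr⟩ := hrS
  set a := X i ω with haa
  set b := X j ω with hbb
  have hinf : Metric.infDist (midpoint ℝ a b) K ≤ dist a b / 2 := by
    by_cases hqa : q0 ≤ Q a
    · have hqb : Q b ≤ q0 := le_of_lt (not_le.1 (fun h => hlab ⟨fun _ => h, fun _ => hqa⟩))
      exact ivt_mid hconv hQ (hmem i) (hmem j) hqb hqa
    · have hqb : q0 ≤ Q b := by
        by_contra h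
        exact hlab ⟨fun h' => absurd h' hqa, fun h' => absurd h' h⟩
      have := ivt_mid hconv hQ (hmem j) (hmem i) (le_of_lt (not_le.1 hqa)) hqb
      rwa [midpoint_comm, dist_comm] at this
  have hrad : ε < dist a b / 2 := by
    rw [hr] at hrε; linarith
  have hmΛ : midpoint ℝ a b ∈ Λ :=
    hconv.segment_subset (hmem i) (hmem j) (midpoint_mem_segment a b)
  obtain ⟨z, hzt, hmz⟩ : ∃ z ∈ t, midpoint ℝ a b ∈ Metric.ball z (ε/4) := by
    simpa using hcover hmΛ
  refine ⟨z, hzt, ?_⟩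
  by_contra hcard
  push_neg at hcard
  unfold cntIn at hcard
  set s := (Finset.range n).filter (fun k => X k ω ∈ Metric.ball z (ε/4)) with hs
  have hk3 : ∃ k ∈ s, X k ω ≠ a ∧ X k ω ≠ b := by
    by_contra h
    push_neg at h
    have hsub : s ⊆ ({i, j} : Finset ℕ) := by
      intro k hk
      by_cases hka : X k ω = a
      · have : k = i := hinj (show (fun k => X k ω) k = (fun k => X k ω) i from hka)
        simp [this]
      · have hkb : X k ω = b := h k hk hka
        have : k = j := hinj (show (fun k => X k ω) k = (fun k => X k ω) j from hkb)
        simp [this]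
    have := Finset.card_le_card hsub
    have h2 : ({i, j} : Finset ℕ).card ≤ 2 := Finset.card_insert_le _ _ |>.trans (by simp)
    omega
  obtain ⟨k, hks, hka, hkb⟩ := hk3
  have hkn : k < n := Finset.mem_range.1 (Finset.mem_filter.1 hks).1
  have hkball : X k ω ∈ Metric.ball z (ε/4) := (Finset.mem_filter.1 hks).2
  have hcmem : X k ω ∈ (fun k => X k ω) '' {k | k < n} := ⟨k, hkn, rfl⟩
  have hnot := hGab.2.2.2 (X k ω) hcmem hka hkb
  apply hnot
  have : dist (X k ω) (midpoint ℝ a b) < ε/2 := by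
    calc dist (X k ω) (midpoint ℝ a b) ≤ dist (X k ω) z + dist z (midpoint ℝ a b) :=
          dist_triangle _ _ _
      _ < ε/4 + ε/4 := by
          apply add_lt_add hkball
          rw [dist_comm]; exact hmz
      _ = ε/2 := by ring
  exact Metric.mem_ball.2 (by linarith)

lemma tail_zero {Ω : Type*} [MeasurableSpace Ω] (P : Measure Ω) [IsProbabilityMeasure P]
    {E' : Type*} [mE : MeasurableSpace E'] {X : ℕ → Ω → E'}
    (hXindep : iIndepFun X P)
    {A : Set E'} (hA : MeasurableSet A) {q : ENNReal} (hq : q < 1)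
    (hbound : ∀ k, P (X k ⁻¹' Aᶜ) ≤ q) :
    Tendsto (fun n => P {ω | cntIn (fun k => X k ω) A n ≤ 2})
      atTop (nhds 0) := by
  simp only [cntIn]
  have key : ∀ S : Finset ℕ, P (⋂ k ∈ S, X k ⁻¹' Aᶜ) ≤ q ^ S.card := by
    intro S
    have := hXindep.measure_inter_preimage_eq_mul S (sets := fun _ => Aᶜ)
      (fun i _ => hA.compl)
    rw [this]
    exact Finset.prod_le_pow_card S _ q (fun k _ => hbound k)
  have hsub : ∀ n, {ω | ((Finset.range n).filter (fun k => X k ω ∈ A)).card ≤ 2} ⊆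
      ⋃ l ∈ Finset.range 3, ⋂ k ∈ Finset.Ico (l * (n/3)) ((l+1) * (n/3)), X k ⁻¹' Aᶜ := by
    intro n ω hω
    by_contra hnot
    simp only [Set.mem_iUnion, Set.mem_iInter, Set.mem_preimage, Set.mem_compl_iff] at hnot
    push_neg at hnot
    have hget : ∀ l, l < 3 → ∃ k ∈ Finset.Ico (l * (n/3)) ((l+1) * (n/3)), X k ω ∈ A := by
      intro l hl
      obtain ⟨k, hk, hkA⟩ := hnot l (Finset.mem_range.2 hl)
      exact ⟨k, hk, hkA⟩
    obtain ⟨k0, hk0, hk0A⟩ := hget 0 (by norm_num)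
    obtain ⟨k1, hk1, hk1A⟩ := hget 1 (by norm_num)
    obtain ⟨k2, hk2, hk2A⟩ := hget 2 (by norm_num)
    rw [Finset.mem_Ico] at hk0 hk1 hk2
    have hdiv : 3 * (n/3) ≤ n := by omega
    have hmem : ∀ k, k < n → X k ω ∈ A →
        k ∈ (Finset.range n).filter (fun k => X k ω ∈ A) := by
      intro k hk hkA; exact Finset.mem_filter.2 ⟨Finset.mem_range.2 hk, hkA⟩
    have h3 : ({k0, k1, k2} : Finset ℕ) ⊆ (Finset.range n).filter (fun k => X k ω ∈ A) := by
      intro k hk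
      simp only [Finset.mem_insert, Finset.mem_singleton] at hk
      rcases hk with rfl | rfl | rfl
      · exact hmem _ (by omega) hk0A
      · exact hmem _ (by omega) hk1A
      · exact hmem _ (by omega) hk2A
    have hcard3 : ({k0, k1, k2} : Finset ℕ).card = 3 := by
      rw [Finset.card_insert_of_notMem (by simp; omega),
        Finset.card_insert_of_notMem (by simp; omega), Finset.card_singleton]
    have := Finset.card_le_card h3
    simp only [Set.mem_setOf_eq] at hω
    omega
  have hle : ∀ n, P {ω | ((Finset.range n).filter (fun k => X k ω ∈ A)).card ≤ 2} ≤
      3 * q ^ (n/3) := by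
    intro n
    calc P {ω | ((Finset.range n).filter (fun k => X k ω ∈ A)).card ≤ 2}
        ≤ P (⋃ l ∈ Finset.range 3, ⋂ k ∈ Finset.Ico (l * (n/3)) ((l+1) * (n/3)), X k ⁻¹' Aᶜ) :=
          measure_mono (hsub n)
      _ ≤ ∑ l ∈ Finset.range 3, P (⋂ k ∈ Finset.Ico (l * (n/3)) ((l+1) * (n/3)), X k ⁻¹' Aᶜ) :=
          measure_biUnion_finset_le _ _
      _ ≤ ∑ l ∈ Finset.range 3, q ^ (n/3) := by
          apply Finset.sum_le_sum
          intro l _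
          have := key (Finset.Ico (l * (n/3)) ((l+1) * (n/3)))
          rwa [Nat.card_Ico, show (l+1) * (n/3) - l * (n/3) = n/3 by ring_nf; omega] at this
      _ = 3 * q ^ (n/3) := by simp [Finset.sum_const, mul_comm]
  have hdivtop : Tendsto (fun n : ℕ => n / 3) atTop atTop :=
    Filter.tendsto_atTop_atTop.2
      (fun b => ⟨3 * b, fun n hn => Nat.le_div_iff_mul_le (by norm_num) |>.2 (by omega)⟩)
  have hpow : Tendsto (fun n : ℕ => q ^ (n / 3)) atTop (nhds 0) :=
    (ENNReal.tendsto_pow_atTop_nhds_zero_of_lt_one hq).comp hdivtop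
  have hmul : Tendsto (fun n : ℕ => 3 * q ^ (n / 3)) atTop (nhds 0) := by
    have := ENNReal.Tendsto.const_mul hpow (Or.inr (by norm_num : (3:ENNReal) ≠ ⊤))
    simpa using this
  exact tendsto_of_tendsto_of_tendsto_of_le_of_le tendsto_const_nhds hmul
    (fun n => zero_le) hle

theorem stmt7 {d : ℕ} (Λ : Set (EuclideanSpace ℝ (Fin d)))
    (hΛcompact : IsCompact Λ) (hΛconvex : Convex ℝ Λ) (hΛpos : 0 < volume Λ)
    (Q : EuclideanSpace ℝ (Fin d) → ℝ) (hQ : ContinuousOn Q Λ) (q0 : ℝ)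
    (hK : ({x ∈ Λ | Q x = q0}).Nonempty)
    (hsides : ∀ z ∈ {x ∈ Λ | Q x = q0}, ∀ r : ℝ, 0 < r →
      0 < volume ({x ∈ Λ | q0 < Q x} ∩ Metric.ball z r) ∧
      0 < volume ({x ∈ Λ | Q x < q0} ∩ Metric.ball z r))
    {Ω : Type*} [MeasurableSpace Ω] (P : Measure Ω) [IsProbabilityMeasure P]
    (X : ℕ → Ω → EuclideanSpace ℝ (Fin d))
    (hXmeas : ∀ i, Measurable (X i))
    (hXindep : iIndepFun X P)
    (hXunif : ∀ i, Measure.map (X i) P = (volume Λ)⁻¹ • volume.restrict Λ)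
    (ε : ℝ) (hε : 0 < ε) :
    Tendsto
      (fun n => P {ω | ε < cbpMaxDistToBoundary X Q q0 {x ∈ Λ | Q x = q0} n ω})
      atTop (nhds 0) := by
  classical
  rcases subsingleton_or_nontrivial (EuclideanSpace ℝ (Fin d)) with hsub | hnt
  · -- degenerate case: the space is a single point, no Gabriel pairs exist
    have hzero : ∀ n ω, cbpMaxDistToBoundary X Q q0 {x ∈ Λ | Q x = q0} n ω = 0 := by
      intro n ω
      have hS : insert (0:ℝ) {r : ℝ | ∃ i, ∃ j, i < j ∧ j < n ∧
          IsGabrielNbr ((fun k => X k ω) '' {k | k < n}) (X i ω) (X j ω) ∧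
          ¬ ((q0 ≤ Q (X i ω)) ↔ (q0 ≤ Q (X j ω))) ∧
          r = Metric.infDist (midpoint ℝ (X i ω) (X j ω)) {x ∈ Λ | Q x = q0}} = {0} := by
        apply Set.Subset.antisymm
        · rintro r (rfl | ⟨i, j, _, _, hG, _⟩)
          · rfl
          · exact absurd (Subsingleton.elim _ _) hG.2.2.1
        · intro r hr; rw [hr]; exact Set.mem_insert _ _
      rw [cbpMaxDistToBoundary, hS, csSup_singleton]
    have hempty : ∀ n, {ω | ε < cbpMaxDistToBoundary X Q q0 {x ∈ Λ | Q x = q0} n ω} = ∅ := by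
      intro n; ext ω
      simp only [Set.mem_setOf_eq, Set.mem_empty_iff_false, iff_false, not_lt, hzero n ω]
      exact hε.le
    simp only [hempty, measure_empty]
    exact tendsto_const_nhds
  · have hΛmeas : MeasurableSet Λ := hΛcompact.isClosed.measurableSet
    have hΛtop : volume Λ ≠ ⊤ := hΛcompact.measure_lt_top.ne
    have hΛinv0 : (volume Λ)⁻¹ ≠ 0 := ENNReal.inv_ne_zero.2 hΛtop
    have hint : (interior Λ).Nonempty := by
      by_contra h
      rw [Set.not_nonempty_iff_eq_empty] at h
      have hspan : affineSpan ℝ Λ ≠ ⊤ := by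
        intro htop
        rw [← hΛconvex.interior_nonempty_iff_affineSpan_eq_top] at htop
        rw [h] at htop
        exact Set.not_nonempty_empty htop
      have h0 : volume Λ = 0 :=
        measure_mono_null (subset_affineSpan ℝ Λ)
          (Measure.addHaar_affineSubspace _ _ hspan)
      exact absurd h0 hΛpos.ne'
    obtain ⟨w, hw⟩ := hint
    -- finite subcover of Λ by balls of radius ε/4 centered in Λ
    obtain ⟨t, hts, htfin, hcover⟩ := hΛcompact.elim_finite_subcover_image
      (fun z (_ : z ∈ Λ) => isOpen_ball (x := z) (ε := ε/4))
      (fun x hx => Set.mem_biUnion hx (mem_ball_self (by positivity)))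
    set μ : Measure (EuclideanSpace ℝ (Fin d)) := (volume Λ)⁻¹ • volume.restrict Λ with hμ
    have hAmeas : ∀ z : EuclideanSpace ℝ (Fin d),
        MeasurableSet (Metric.ball z (ε/4) ∩ Λ) := fun z => measurableSet_ball.inter hΛmeas
    have hPXA : ∀ k (A : Set (EuclideanSpace ℝ (Fin d))), MeasurableSet A →
        P (X k ⁻¹' A) = μ A := by
      intro k A hA
      rw [← Measure.map_apply (hXmeas k) hA, hXunif k]
    -- positivity of μ on each covering piece
    have hμApos : ∀ z ∈ t, 0 < μ (Metric.ball z (ε/4) ∩ Λ) := by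
      intro z hz
      have hzΛ : z ∈ Λ := hts hz
      have hvpos : 0 < volume (Metric.ball z (ε/4) ∩ Λ) := by
        set c : ℝ := min 1 ((ε/4) / (dist w z + 1)) with hc
        have hc0 : 0 < c := lt_min one_pos (by positivity)
        have hc1 : c ≤ 1 := min_le_left _ _
        have hu : c • w + (1 - c) • z ∈ interior Λ :=
          hΛconvex.combo_interior_closure_mem_interior hw (subset_closure hzΛ) hc0
            (by linarith) (by ring)
        have hdistu : dist (c • w + (1 - c) • z) z < ε/4 := by
          have heq : c • w + (1 - c) • z - z = c • (w - z) := by module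
          rw [dist_eq_norm, heq, norm_smul, Real.norm_eq_abs, abs_of_pos hc0,
            ← dist_eq_norm]
          calc c * dist w z ≤ ((ε/4) / (dist w z + 1)) * dist w z :=
                mul_le_mul_of_nonneg_right (min_le_right _ _) dist_nonneg
            _ < ε/4 := by
                rw [div_mul_eq_mul_div, div_lt_iff₀ (by positivity)]
                nlinarith [dist_nonneg (x := w) (y := z)]
        have hopen : IsOpen (interior Λ ∩ Metric.ball z (ε/4)) :=
          isOpen_interior.inter isOpen_ball
        have hne : (interior Λ ∩ Metric.ball z (ε/4)).Nonempty :=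
          ⟨c • w + (1 - c) • z, hu, Metric.mem_ball.2 hdistu⟩
        refine lt_of_lt_of_le (hopen.measure_pos volume hne) (measure_mono ?_)
        exact fun x hx => ⟨hx.2, interior_subset hx.1⟩
      rw [hμ, Measure.smul_apply, Measure.restrict_apply (hAmeas z), smul_eq_mul]
      have hinter : (Metric.ball z (ε/4) ∩ Λ) ∩ Λ = Metric.ball z (ε/4) ∩ Λ := by
        rw [Set.inter_assoc, Set.inter_self]
      rw [hinter]
      exact ENNReal.mul_pos hΛinv0 hvpos.ne'
    -- complement probabilities are uniformly < 1
    have hcompl : ∀ z, ∀ k, P (X k ⁻¹' (Metric.ball z (ε/4) ∩ Λ)ᶜ) =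
        1 - μ (Metric.ball z (ε/4) ∩ Λ) := by
      intro z k
      rw [Set.preimage_compl, prob_compl_eq_one_sub (hXmeas k (hAmeas z)), hPXA k _ (hAmeas z)]
    have hqlt : ∀ z ∈ t, 1 - μ (Metric.ball z (ε/4) ∩ Λ) < 1 := by
      intro z hz
      exact ENNReal.sub_lt_self ENNReal.one_ne_top one_ne_zero (hμApos z hz).ne'
    -- the two null events
    have hpair : ∀ i j, i ≠ j → P {ω | X i ω = X j ω} = 0 := by
      intro i j hij
      have hind : IndepFun (X i) (X j) P := hXindep.indepFun hij
      have hmap := (ProbabilityTheory.indepFun_iff_map_prod_eq_prod_map_map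
        (hXmeas i).aemeasurable (hXmeas j).aemeasurable).1 hind
      have hdiag : MeasurableSet (Set.diagonal (EuclideanSpace ℝ (Fin d))) :=
        isClosed_diagonal.measurableSet
      have hset : {ω | X i ω = X j ω} =
          (fun ω => (X i ω, X j ω)) ⁻¹' Set.diagonal (EuclideanSpace ℝ (Fin d)) := rfl
      haveI : IsProbabilityMeasure (Measure.map (X j) P) :=
        Measure.isProbabilityMeasure_map (hXmeas j).aemeasurable
      rw [hset, ← Measure.map_apply ((hXmeas i).prodMk (hXmeas j)) hdiag, hmap,
        Measure.prod_apply hdiag]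
      have hz : ∀ x, (Measure.map (X j) P) (Prod.mk x ⁻¹' Set.diagonal
          (EuclideanSpace ℝ (Fin d))) = 0 := by
        intro x
        have hpre : Prod.mk x ⁻¹' Set.diagonal (EuclideanSpace ℝ (Fin d)) = {x} := by
          ext y; simp [Set.diagonal, eq_comm]
        rw [hpre, hXunif j, Measure.smul_apply,
          Measure.restrict_apply (measurableSet_singleton x), smul_eq_mul]
        have : volume ({x} ∩ Λ) = 0 :=
          measure_mono_null Set.inter_subset_left (measure_singleton x)
        rw [this, mul_zero]
      simp only [hz, lintegral_zero]
    set N : Set Ω := {ω | ¬ ∀ k, X k ω ∈ Λ} ∪ {ω | ∃ i j, i ≠ j ∧ X i ω = X j ω} with hN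
    have hNnull : P N = 0 := by
      apply measure_union_null
      · have heq : {ω | ¬ ∀ k, X k ω ∈ Λ} = ⋃ k, X k ⁻¹' Λᶜ := by
          ext ω; simp [not_forall]
        rw [heq]
        apply measure_iUnion_null
        intro k
        rw [hPXA k _ hΛmeas.compl, hμ, Measure.smul_apply,
          Measure.restrict_apply hΛmeas.compl, Set.compl_inter_self]
        simp
      · have hsub2 : {ω | ∃ i j, i ≠ j ∧ X i ω = X j ω} ⊆
            ⋃ i, ⋃ j, {ω | i ≠ j ∧ X i ω = X j ω} := by
          rintro ω ⟨i, j, h⟩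
          exact Set.mem_iUnion.2 ⟨i, Set.mem_iUnion.2 ⟨j, h⟩⟩
        apply measure_mono_null hsub2
        apply measure_iUnion_null; intro i
        apply measure_iUnion_null; intro j
        by_cases hij : i = j
        · subst hij
          have : {ω | i ≠ i ∧ X i ω = X i ω} = ∅ := by ext ω; simp
          rw [this]; exact measure_empty
        · exact measure_mono_null (fun ω hω => hω.2) (hpair i j hij)
    -- events with too few points near a covering center
    set T := htfin.toFinset with hT
    set B : EuclideanSpace ℝ (Fin d) → ℕ → Set Ω := fun z n =>
      {ω | cntIn (fun k => X k ω) (Metric.ball z (ε/4) ∩ Λ) n ≤ 2} with hB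
    have hmain : ∀ n, P {ω | ε < cbpMaxDistToBoundary X Q q0 {x ∈ Λ | Q x = q0} n ω} ≤
        ∑ z ∈ T, P (B z n) := by
      intro n
      have hsubset : {ω | ε < cbpMaxDistToBoundary X Q q0 {x ∈ Λ | Q x = q0} n ω} ⊆
          (⋃ z ∈ T, B z n) ∪ N := by
        intro ω hω
        by_cases hNmem : ω ∈ N
        · exact Or.inr hNmem
        · left
          rw [hN] at hNmem
          simp only [Set.mem_union, Set.mem_setOf_eq, not_or, not_not] at hNmem
          obtain ⟨hmem, hnc⟩ := hNmem
          push_neg at hnc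
          have hinj : Function.Injective (fun k => X k ω) := by
            intro k l hkl
            by_contra hne
            exact hnc k l hne hkl
          obtain ⟨z, hzt, hzcard⟩ := geom_key hΛconvex hQ hε hcover hmem hinj hω
          refine Set.mem_biUnion (htfin.mem_toFinset.2 hzt) ?_
          exact le_trans (cntIn_mono _ Set.inter_subset_left n) hzcard
      calc P {ω | ε < cbpMaxDistToBoundary X Q q0 {x ∈ Λ | Q x = q0} n ω}
          ≤ P ((⋃ z ∈ T, B z n) ∪ N) := measure_mono hsubset
        _ ≤ P (⋃ z ∈ T, B z n) + P N := measure_union_le _ _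
        _ = P (⋃ z ∈ T, B z n) := by rw [hNnull, add_zero]
        _ ≤ ∑ z ∈ T, P (B z n) := measure_biUnion_finset_le _ _
    have hsum : Tendsto (fun n => ∑ z ∈ T, P (B z n)) atTop (nhds 0) := by
      have htend : ∀ z ∈ T, Tendsto (fun n => P (B z n)) atTop (nhds 0) := by
        intro z hz
        have hzt : z ∈ t := htfin.mem_toFinset.1 hz
        exact tail_zero P hXindep (hAmeas z) (hqlt z hzt)
          (fun k => le_of_eq (hcompl z k))
      have := tendsto_finset_sum T htend
      simpa using this
    exact tendsto_of_tendsto_of_tendsto_of_le_of_le tendsto_const_nhds hsum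
      (fun n => zero_le) hmain
end

section
/- Let Λ ⊂ ℝ^d be a compact convex set with positive Lebesgue measure, let Q : ℝ^d → ℝ be continuous on Λ, let q0 ∈ ℝ, and assume that both sets {x ∈ Λ : Q(x) ≥ q0} and {x ∈ Λ : Q(x) < q0} have positive Lebesgue measure. Let x_1, x_2, … be i.i.d. random points uniformly distributed on Λ, labeled y_i = +1 if Q(x_i) ≥ q0 and y_i = −1 otherwise. Then the probability that the Gabriel edited set of {x_1, …, x_n} is nonempty (i.e., that there exists a pair of Gabriel neighbors with different labels) tends to 1 as n → ∞. -/
open MeasureTheory ProbabilityTheory Filter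

lemma isGabrielNbr_symm {d : ℕ} {S : Set (EuclideanSpace ℝ (Fin d))}
    {a b : EuclideanSpace ℝ (Fin d)} (h : IsGabrielNbr S a b) : IsGabrielNbr S b a := by
  obtain ⟨ha, hb, hab, h⟩ := h
  refine ⟨hb, ha, hab.symm, fun c hc hcb hca => ?_⟩
  rw [midpoint_comm, dist_comm]
  exact h c hc hca hcb

lemma exists_gabriel {d : ℕ} {S : Set (EuclideanSpace ℝ (Fin d))} (hS : S.Finite)
    {L : EuclideanSpace ℝ (Fin d) → Prop} {a0 b0 : EuclideanSpace ℝ (Fin d)}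
    (ha0 : a0 ∈ S) (hb0 : b0 ∈ S) (hL : L a0) (hL' : ¬ L b0) :
    ∃ a ∈ S, ∃ b ∈ S, IsGabrielNbr S a b ∧ L a ∧ ¬ L b := by
  classical
  set T : Set (EuclideanSpace ℝ (Fin d) × EuclideanSpace ℝ (Fin d)) :=
    {p | p.1 ∈ S ∧ p.2 ∈ S ∧ L p.1 ∧ ¬ L p.2} with hT
  have hTfin : T.Finite := (hS.prod hS).subset (fun p hp => ⟨hp.1, hp.2.1⟩)
  have hTne : T.Nonempty := ⟨(a0, b0), ⟨ha0, hb0, hL, hL'⟩⟩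
  obtain ⟨p, hpT, hpmin⟩ := Set.exists_min_image T (fun p => dist p.1 p.2) hTfin hTne
  obtain ⟨haS, hbS, hLa, hLb⟩ := hpT
  refine ⟨p.1, haS, p.2, hbS, ⟨haS, hbS, ?_, ?_⟩, hLa, hLb⟩
  · intro h; exact hLb (h ▸ hLa)
  · intro c hcS hca hcb hc
    have hmem := Metric.mem_ball.mp hc
    have hml : dist (midpoint ℝ p.1 p.2) p.1 = dist p.1 p.2 / 2 := by
      rw [dist_midpoint_left, Real.norm_two]; ring
    have hmr : dist (midpoint ℝ p.1 p.2) p.2 = dist p.1 p.2 / 2 := by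
      rw [dist_midpoint_right, Real.norm_two]; ring
    have h1 : dist c p.1 < dist p.1 p.2 := by
      have := dist_triangle c (midpoint ℝ p.1 p.2) p.1
      rw [hml] at this; linarith
    have h2 : dist c p.2 < dist p.1 p.2 := by
      have := dist_triangle c (midpoint ℝ p.1 p.2) p.2
      rw [hmr] at this; linarith
    by_cases hLc : L c
    · have : (c, p.2) ∈ T := ⟨hcS, hbS, hLc, hLb⟩
      have := hpmin _ this
      simp only at this
      linarith
    · have : (p.1, c) ∈ T := ⟨haS, hcS, hLa, hLc⟩
      have := hpmin _ this
      simp only at this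
      rw [dist_comm p.1 c] at this
      linarith

theorem stmt8 {d : ℕ} (Λ : Set (EuclideanSpace ℝ (Fin d)))
    (hΛcompact : IsCompact Λ) (hΛconvex : Convex ℝ Λ) (hΛpos : 0 < volume Λ)
    (Q : EuclideanSpace ℝ (Fin d) → ℝ) (hQ : ContinuousOn Q Λ) (q0 : ℝ)
    (hpos : 0 < volume {x ∈ Λ | q0 ≤ Q x}) (hneg : 0 < volume {x ∈ Λ | Q x < q0})
    {Ω : Type*} [MeasurableSpace Ω] (P : Measure Ω) [IsProbabilityMeasure P]
    (X : ℕ → Ω → EuclideanSpace ℝ (Fin d))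
    (hXmeas : ∀ i, Measurable (X i))
    (hXindep : iIndepFun X P)
    (hXunif : ∀ i, Measure.map (X i) P = (volume Λ)⁻¹ • volume.restrict Λ) :
    Tendsto (fun n : ℕ =>
        P {ω | ∃ i, ∃ j, i < j ∧ j < n ∧
          IsGabrielNbr ((fun k => X k ω) '' {k | k < n}) (X i ω) (X j ω) ∧
          ¬ ((q0 ≤ Q (X i ω)) ↔ (q0 ≤ Q (X j ω)))})
      atTop (nhds 1) := by
  classical
  set A : Set (EuclideanSpace ℝ (Fin d)) := {x ∈ Λ | q0 ≤ Q x} with hA_def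
  set B : Set (EuclideanSpace ℝ (Fin d)) := {x ∈ Λ | Q x < q0} with hB_def
  have hΛclosed : IsClosed Λ := hΛcompact.isClosed
  have hAclosed : IsClosed A := by
    have : A = Λ ∩ Q ⁻¹' Set.Ici q0 := by
      ext x; simp [hA_def, Set.mem_preimage]
    rw [this]
    exact hQ.preimage_isClosed_of_isClosed hΛclosed isClosed_Ici
  have hAmeas : MeasurableSet A := hAclosed.measurableSet
  have hBeq : B = Λ \ A := by
    ext x; simp only [hA_def, hB_def, Set.mem_setOf_eq, Set.mem_diff, not_and, not_le]
    constructor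
    · exact fun h => ⟨h.1, fun _ => h.2⟩
    · exact fun h => ⟨h.1, h.2 h.1⟩
  have hBmeas : MeasurableSet B := hBeq ▸ hΛclosed.measurableSet.diff hAmeas
  have hΛfin : volume Λ ≠ ⊤ := hΛcompact.measure_lt_top.ne
  have hΛne : volume Λ ≠ 0 := hΛpos.ne'
  -- basic probability of preimages
  have hprob : ∀ (i : ℕ) (C : Set (EuclideanSpace ℝ (Fin d))), MeasurableSet C →
      P (X i ⁻¹' C) = (volume Λ)⁻¹ * volume (C ∩ Λ) := by
    intro i C hC
    have : Measure.map (X i) P C = P (X i ⁻¹' C) := Measure.map_apply (hXmeas i) hC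
    rw [hXunif i] at this
    rw [← this, Measure.smul_apply, Measure.restrict_apply hC, smul_eq_mul]
  have hAcΛ : Aᶜ ∩ Λ = B := by
    ext x
    simp only [hA_def, hB_def, Set.mem_inter_iff, Set.mem_compl_iff, Set.mem_setOf_eq, not_and,
      not_le]
    constructor
    · exact fun h => ⟨h.2, h.1 h.2⟩
    · exact fun h => ⟨fun _ => h.2, h.1⟩
  have hBcΛ : Bᶜ ∩ Λ = A := by
    ext x
    simp only [hA_def, hB_def, Set.mem_inter_iff, Set.mem_compl_iff, Set.mem_setOf_eq, not_and,
      not_lt]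
    constructor
    · exact fun h => ⟨h.2, h.1 h.2⟩
    · exact fun h => ⟨fun _ => h.2, h.1⟩
  set α : ENNReal := (volume Λ)⁻¹ * volume A with hα_def
  set β : ENNReal := (volume Λ)⁻¹ * volume B with hβ_def
  have hPA : ∀ i, P (X i ⁻¹' Bᶜ) = α := by
    intro i; rw [hprob i _ hBmeas.compl, hBcΛ]
  have hPB : ∀ i, P (X i ⁻¹' Aᶜ) = β := by
    intro i; rw [hprob i _ hAmeas.compl, hAcΛ]
  -- volume Λ = volume A + volume B
  have hsum : volume A + volume B = volume Λ := by
    rw [hBeq, measure_add_diff hAmeas.nullMeasurableSet]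
    congr 1
    ext x; simp only [hA_def, Set.mem_union, Set.mem_setOf_eq]
    exact ⟨fun h => h.elim And.left id, fun h => Or.inr h⟩
  have hAfin : volume A ≠ ⊤ := by
    intro h; rw [h] at hsum; simp at hsum; exact hΛfin hsum.symm
  have hBfin : volume B ≠ ⊤ := by
    intro h; rw [h] at hsum; simp at hsum; exact hΛfin hsum.symm
  have hlt : ∀ v w : ENNReal, v ≠ ⊤ → w ≠ 0 → v + w = volume Λ →
      (volume Λ)⁻¹ * v < 1 := by
    intro v w hv hw hvw
    have h1 : v < volume Λ := by
      rw [← hvw]; exact ENNReal.lt_add_right hv hw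
    calc (volume Λ)⁻¹ * v < (volume Λ)⁻¹ * volume Λ := by
          rw [ENNReal.mul_lt_mul_iff_right (by simp [hΛfin]) (ENNReal.inv_ne_top.mpr hΛne)]
          exact h1
      _ = 1 := ENNReal.inv_mul_cancel hΛne hΛfin
  have hαlt : α < 1 := hlt (volume A) (volume B) hAfin hneg.ne' hsum
  have hβlt : β < 1 := by
    refine hlt (volume B) (volume A) hBfin hpos.ne' ?_
    rw [add_comm]; exact hsum
  -- independence: probability that no point lands in A (resp. B) among first n
  have hno : ∀ (C : Set (EuclideanSpace ℝ (Fin d))), MeasurableSet C → ∀ n : ℕ,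
      P (⋂ i ∈ Finset.range n, X i ⁻¹' Cᶜ) = ((volume Λ)⁻¹ * volume (Cᶜ ∩ Λ)) ^ n := by
    intro C hC n
    rw [hXindep.meas_biInter (S := Finset.range n) (s := fun i => X i ⁻¹' Cᶜ)
      (fun i _ => ⟨Cᶜ, hC.compl, rfl⟩)]
    rw [Finset.prod_congr rfl (fun i _ => hprob i _ hC.compl), Finset.prod_const,
      Finset.card_range]
  -- the "both labels" event
  set D : ℕ → Set Ω := fun n =>
    {ω | (∃ i < n, X i ω ∈ A) ∧ (∃ j < n, X j ω ∈ B)} with hD_def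
  have hDmeas : ∀ n, MeasurableSet (D n) := by
    intro n
    have h1 : D n = (⋃ i ∈ Finset.range n, X i ⁻¹' A) ∩ (⋃ j ∈ Finset.range n, X j ⁻¹' B) := by
      ext ω
      simp [hD_def, Finset.mem_range]
    rw [h1]
    exact (MeasurableSet.biUnion (Finset.range n).countable_toSet
        (fun i _ => (hXmeas i) hAmeas)).inter
      (MeasurableSet.biUnion (Finset.range n).countable_toSet (fun i _ => (hXmeas i) hBmeas))
  -- complement bound
  have hDcompl : ∀ n, P (D n)ᶜ ≤ β ^ n + α ^ n := by
    intro n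
    have hsub : (D n)ᶜ ⊆ (⋂ i ∈ Finset.range n, X i ⁻¹' Aᶜ) ∪
        (⋂ j ∈ Finset.range n, X j ⁻¹' Bᶜ) := by
      intro ω hω
      simp only [hD_def, Set.mem_compl_iff, Set.mem_setOf_eq, not_and_or] at hω
      rcases hω with h | h
      · left
        push_neg at h
        simp only [Set.mem_iInter, Finset.mem_range, Set.mem_preimage, Set.mem_compl_iff]
        exact fun i hi => h i hi
      · right
        push_neg at h
        simp only [Set.mem_iInter, Finset.mem_range, Set.mem_preimage, Set.mem_compl_iff]
        exact fun i hi => h i hi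
    calc P (D n)ᶜ ≤ P ((⋂ i ∈ Finset.range n, X i ⁻¹' Aᶜ) ∪
        (⋂ j ∈ Finset.range n, X j ⁻¹' Bᶜ)) := measure_mono hsub
      _ ≤ P (⋂ i ∈ Finset.range n, X i ⁻¹' Aᶜ) + P (⋂ j ∈ Finset.range n, X j ⁻¹' Bᶜ) :=
          measure_union_le _ _
      _ = β ^ n + α ^ n := by
          rw [hno A hAmeas n, hno B hBmeas n, hAcΛ, hBcΛ]
  -- D n is contained in the Gabriel event
  set G : ℕ → Set Ω := fun n => {ω | ∃ i, ∃ j, i < j ∧ j < n ∧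
      IsGabrielNbr ((fun k => X k ω) '' {k | k < n}) (X i ω) (X j ω) ∧
      ¬ ((q0 ≤ Q (X i ω)) ↔ (q0 ≤ Q (X j ω)))} with hG_def
  have hDG : ∀ n, D n ⊆ G n := by
    intro n ω hω
    obtain ⟨⟨i, hi, hiA⟩, ⟨j, hj, hjB⟩⟩ := hω
    set S : Set (EuclideanSpace ℝ (Fin d)) := (fun k => X k ω) '' {k | k < n} with hS_def
    have hSfin : S.Finite := (Set.finite_lt_nat n).image _
    have haS : X i ω ∈ S := ⟨i, hi, rfl⟩
    have hbS : X j ω ∈ S := ⟨j, hj, rfl⟩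
    have hLa : q0 ≤ Q (X i ω) := hiA.2
    have hLb : ¬ q0 ≤ Q (X j ω) := not_le.mpr hjB.2
    obtain ⟨a, haS', b, hbS', hGab, hLa', hLb'⟩ :=
      exists_gabriel hSfin (L := fun x => q0 ≤ Q x) haS hbS hLa hLb
    obtain ⟨i', hi', rfl⟩ := haS'
    obtain ⟨j', hj', rfl⟩ := hbS'
    rcases lt_trichotomy i' j' with h | h | h
    · exact ⟨i', j', h, hj', hGab, fun hiff => hLb' (hiff.mp hLa')⟩
    · exact absurd (by rw [h]) hGab.2.2.1
    · exact ⟨j', i', h, hi', isGabrielNbr_symm hGab, fun hiff => hLa' |> fun ha =>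
        (fun hiff' => hLb' (hiff'.mpr ha)) hiff⟩
  -- lower bound for P (G n)
  have hlow : ∀ n, 1 - (β ^ n + α ^ n) ≤ P (G n) := by
    intro n
    have h1 : P (D n) + P (D n)ᶜ = 1 := by
      rw [measure_add_measure_compl (hDmeas n), measure_univ]
    have h2 : P (D n) = 1 - P (D n)ᶜ := by
      refine ENNReal.eq_sub_of_add_eq ?_ h1
      exact (measure_mono (Set.subset_univ _)).trans_lt (by simp) |>.ne
    calc 1 - (β ^ n + α ^ n) ≤ 1 - P (D n)ᶜ := tsub_le_tsub_left (hDcompl n) 1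
      _ = P (D n) := h2.symm
      _ ≤ P (G n) := measure_mono (hDG n)
  -- conclude by squeezing
  have htend : Tendsto (fun n : ℕ => 1 - (β ^ n + α ^ n)) atTop (nhds 1) := by
    have hβ0 : Tendsto (fun n : ℕ => β ^ n) atTop (nhds 0) :=
      ENNReal.tendsto_pow_atTop_nhds_zero_of_lt_one hβlt
    have hα0 : Tendsto (fun n : ℕ => α ^ n) atTop (nhds 0) :=
      ENNReal.tendsto_pow_atTop_nhds_zero_of_lt_one hαlt
    have hsum0 : Tendsto (fun n : ℕ => β ^ n + α ^ n) atTop (nhds 0) := by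
      simpa using hβ0.add hα0
    have := ENNReal.Tendsto.sub (tendsto_const_nhds (x := (1 : ENNReal))) hsum0
      (Or.inl (by simp))
    simpa using this
  refine tendsto_of_tendsto_of_tendsto_of_le_of_le htend tendsto_const_nhds
    (fun n => hlow n) (fun n => prob_le_one)
end
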